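/- Let λ ≥ 1 and let (x_i) be a (finite or infinite) λ-wide-(s) sequence in a real Banach space. Then every convex block basis (u_j) of (x_i) is again λ-wide-(s). -/
import Mathlib


open Finset Filter Metric NormedSpace

noncomputable section

universe u

variable {X Y : Type*} [NormedAddCommGroup X] [NormedSpace ℝ X]
  [NormedAddCommGroup Y] [NormedSpace ℝ Y]

/-- `b` is a `lam`-basic sequence of length `N` (with `N = ⊤` the infinite case). -/
def IsBasicLen (lam : ℝ) (N : ℕ∞) (b : ℕ → X) : Prop :=
  ∀ (c : ℕ → ℝ) (k n : ℕ), k ≤ n → (n : ℕ∞) ≤ N →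
    ‖∑ j ∈ Finset.range k, c j • b j‖ ≤ lam * ‖∑ j ∈ Finset.range n, c j • b j‖

/-- `b` is a `lam`-wide-(s) sequence of length `N` (with `N = ⊤` the infinite case). -/
def IsWideSLen (lam : ℝ) (N : ℕ∞) (b : ℕ → X) : Prop :=
  IsBasicLen (2 * lam) N b ∧ (∀ j : ℕ, (j : ℕ∞) < N → ‖b j‖ ≤ lam) ∧
    ∀ (c : ℕ → ℝ) (k n : ℕ), k ≤ n → (n : ℕ∞) ≤ N →
      |∑ j ∈ Finset.Ico k n, c j| ≤ lam * ‖∑ j ∈ Finset.range n, c j • b j‖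

/-- `u` is a convex block basis (of length `M`) of the sequence `x` of length `N`
(`⊤` denoting the infinite case). -/
def IsConvexBlockBasisLen (M N : ℕ∞) (u x : ℕ → X) : Prop :=
  ∃ (n : ℕ → ℕ) (a : ℕ → ℝ),
    (∀ j : ℕ, (j : ℕ∞) < M → n j < n (j + 1)) ∧
    (∀ j : ℕ, (j : ℕ∞) < M → (n (j + 1) : ℕ∞) ≤ N) ∧
    (∀ i, 0 ≤ a i) ∧
    (∀ j : ℕ, (j : ℕ∞) < M → ∑ i ∈ Finset.Ico (n j) (n (j + 1)), a i = 1) ∧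
    (∀ j : ℕ, (j : ℕ∞) < M → u j = ∑ i ∈ Finset.Ico (n j) (n (j + 1)), a i • x i)

private lemma mono_of (n : ℕ → ℕ) (m : ℕ) (h : ∀ j, j < m → n j < n (j + 1)) :
    ∀ j' ≤ m, ∀ j ≤ j', n j ≤ n j' := by
  intro j' hj'
  induction j' with
  | zero => intro j hj; simp [Nat.le_zero.mp hj]
  | succ k ih =>
    intro j hj
    rcases Nat.eq_or_lt_of_le hj with rfl | hlt
    · exact le_rfl
    · exact le_trans (ih (by omega) j (by omega)) (h k (by omega)).le

private lemma key_sum {Z : Type*} [AddCommMonoid Z] [Module ℝ Z]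
    (n : ℕ → ℕ) (m : ℕ) (hmono : ∀ j, j < m → n j < n (j + 1))
    (c a : ℕ → ℝ) (x : ℕ → Z) :
    ∀ k ≤ m,
      ∑ i ∈ Finset.range (n k),
        (∑ j ∈ Finset.range m, if n j ≤ i ∧ i < n (j + 1) then c j * a i else 0) • x i
      = ∑ j ∈ Finset.range k, c j • ∑ i ∈ Finset.Ico (n j) (n (j + 1)), a i • x i := by
  intro k hk
  induction k with
  | zero =>
    simp only [Finset.range_zero, Finset.sum_empty]
    apply Finset.sum_eq_zero
    intro i hi
    rw [Finset.mem_range] at hi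
    have hz : ∀ j ∈ Finset.range m,
        (if n j ≤ i ∧ i < n (j + 1) then c j * a i else 0) = 0 := by
      intro j hj
      rw [if_neg]
      rintro ⟨h1, _⟩
      have := mono_of n m hmono j (Finset.mem_range.mp hj).le 0 (Nat.zero_le _)
      omega
    rw [Finset.sum_eq_zero hz, zero_smul]
  | succ k ih =>
    have hk' : k ≤ m := by omega
    have hnk : n k ≤ n (k + 1) := (hmono k (by omega)).le
    rw [← Finset.sum_range_add_sum_Ico _ hnk, ih hk', Finset.sum_range_succ]
    congr 1
    have hd : ∀ i ∈ Finset.Ico (n k) (n (k + 1)),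
        (∑ j ∈ Finset.range m, if n j ≤ i ∧ i < n (j + 1) then c j * a i else 0) • x i
        = c k • (a i • x i) := by
      intro i hi
      rw [Finset.mem_Ico] at hi
      rw [Finset.sum_eq_single_of_mem k (Finset.mem_range.mpr (by omega))]
      · rw [if_pos ⟨hi.1, hi.2⟩, smul_smul]
      · intro j hj hne
        rw [if_neg]
        rintro ⟨h1, h2⟩
        rcases lt_or_gt_of_ne hne with hlt | hgt
        · have := mono_of n m hmono k hk' (j + 1) hlt
          omega
        · have := mono_of n m hmono j (Finset.mem_range.mp hj).le (k + 1) hgt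
          omega
    rw [Finset.sum_congr rfl hd, ← Finset.smul_sum]

/-- every convex block basis of a (finite or infinite) `lam`-wide-(s)
sequence is again `lam`-wide-(s). -/
theorem stmt_3 [CompleteSpace X] (lam : ℝ) (hlam : 1 ≤ lam) (M N : ℕ∞) (x u : ℕ → X)
    (hx : IsWideSLen lam N x) (hu : IsConvexBlockBasisLen M N u x) :
    IsWideSLen lam M u := by
  obtain ⟨n, a, hmono, hN, ha, hsum1, hux⟩ := hu
  -- common setup for the basic and wide-(s) estimates
  have setup : ∀ (c : ℕ → ℝ) (m : ℕ), (m : ℕ∞) ≤ M → m ≠ 0 →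
      ∃ d : ℕ → ℝ,
        (∀ k ≤ m, ∑ i ∈ Finset.range (n k), d i • x i = ∑ j ∈ Finset.range k, c j • u j) ∧
        (∀ k ≤ m, ∑ i ∈ Finset.range (n k), d i = ∑ j ∈ Finset.range k, c j) ∧
        (n m : ℕ∞) ≤ N ∧ (∀ k ≤ m, n k ≤ n m) := by
    intro c m hmM hm0
    have hjM : ∀ j, j < m → (j : ℕ∞) < M := fun j hj =>
      lt_of_lt_of_le (by exact_mod_cast hj) hmM
    have hmono' : ∀ j, j < m → n j < n (j + 1) := fun j hj => hmono j (hjM j hj)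
    refine ⟨fun i => ∑ j ∈ Finset.range m, if n j ≤ i ∧ i < n (j + 1) then c j * a i else 0,
      ?_, ?_, ?_, fun k hk => mono_of n m hmono' m le_rfl k hk⟩
    · intro k hk
      rw [key_sum n m hmono' c a x k hk]
      refine Finset.sum_congr rfl fun j hj => ?_
      rw [hux j (hjM j (lt_of_lt_of_le (Finset.mem_range.mp hj) hk))]
    · intro k hk
      have h := key_sum n m hmono' c a (fun _ => (1 : ℝ)) k hk
      simp only [smul_eq_mul, mul_one] at h
      rw [h]
      refine Finset.sum_congr rfl fun j hj => ?_
      rw [hsum1 j (hjM j (lt_of_lt_of_le (Finset.mem_range.mp hj) hk)), mul_one]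
    · obtain ⟨m', rfl⟩ := Nat.exists_eq_succ_of_ne_zero hm0
      exact hN m' (hjM m' (Nat.lt_succ_self m'))
  refine ⟨?_, ?_, ?_⟩
  · -- 2λ-basic
    intro c k m hkm hmM
    rcases Nat.eq_zero_or_pos m with rfl | hm0
    · have : k = 0 := by omega
      subst this
      simp
    obtain ⟨d, hvec, -, hNm, hle⟩ := setup c m hmM (by omega)
    rw [← hvec k hkm, ← hvec m le_rfl]
    exact hx.1 d (n k) (n m) (hle k hkm) hNm
  · -- norm bound
    intro j hj
    rw [hux j hj]
    have hxin : ∀ i ∈ Finset.Ico (n j) (n (j + 1)), ‖a i • x i‖ ≤ a i * lam := by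
      intro i hi
      rw [Finset.mem_Ico] at hi
      have hiN : (i : ℕ∞) < N :=
        lt_of_lt_of_le (by exact_mod_cast hi.2) (hN j hj)
      rw [norm_smul, Real.norm_eq_abs, abs_of_nonneg (ha i)]
      exact mul_le_mul_of_nonneg_left (hx.2.1 i hiN) (ha i)
    calc ‖∑ i ∈ Finset.Ico (n j) (n (j + 1)), a i • x i‖
        ≤ ∑ i ∈ Finset.Ico (n j) (n (j + 1)), ‖a i • x i‖ := norm_sum_le _ _
      _ ≤ ∑ i ∈ Finset.Ico (n j) (n (j + 1)), a i * lam := Finset.sum_le_sum hxin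
      _ = lam := by rw [← Finset.sum_mul, hsum1 j hj, one_mul]
  · -- wide-(s) estimate
    intro c k m hkm hmM
    rcases Nat.eq_zero_or_pos m with rfl | hm0
    · have : k = 0 := by omega
      subst this
      simp
    obtain ⟨d, hvec, hscal, hNm, hle⟩ := setup c m hmM (by omega)
    have h1 : ∑ j ∈ Finset.Ico k m, c j = ∑ i ∈ Finset.Ico (n k) (n m), d i := by
      rw [Finset.sum_Ico_eq_sub _ hkm, Finset.sum_Ico_eq_sub _ (hle k hkm),
        hscal k hkm, hscal m le_rfl]
    rw [h1, ← hvec m le_rfl]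
    exact hx.2.2 d (n k) (n m) (hle k hkm) hNm
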